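/- Let S ⊆ S_{m+1} be a set of forbidden consecutive patterns and define χ : [0,1]^{m+1} → {0,1} by χ(x) = 1 if the coordinates of x are pairwise distinct and the standardization Π(x) ∉ S, and χ(x) = 0 otherwise. Define the operator T on L²([0,1]^m) by (Tf)(x_1,…,x_m) = ∫₀¹ χ(t,x_1,…,x_m) f(t,x_1,…,x_{m-1}) dt. Then for all n ≥ m, α_n(S)/n! = ⟨T^{n-m}(𝟙), 𝟙⟩, where 𝟙 is the constant function 1 and ⟨·,·⟩ is the L² inner product on [0,1]^m. -/

import Mathlib

open MeasureTheory

noncomputable section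

/-- The unit cube [0,1]^m. -/
def unitCube (m : ℕ) : Set (Fin m → ℝ) := Set.univ.pi fun _ => Set.Icc (0 : ℝ) 1

/-- The vector (t, x₁, …, x_{m-1}) obtained by shifting x and prepending t. -/
def shiftIn {m : ℕ} (t : ℝ) (x : Fin m → ℝ) : Fin m → ℝ :=
  fun i => if i.val = 0 then t else x ⟨i.val - 1, by have := i.isLt; omega⟩

/-- `y` realizes (is order-isomorphic to, i.e. has standardization) the pattern `σ`. -/
def Realizes {k : ℕ} (y : Fin k → ℝ) (σ : Equiv.Perm (Fin k)) : Prop :=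
  ∀ a b : Fin k, σ a < σ b ↔ y a < y b

open Classical in
/-- χ(x) = 1 if the coordinates of x are pairwise distinct and its standardization
avoids S, and 0 otherwise. -/
def chiS {m : ℕ} (S : Set (Equiv.Perm (Fin (m + 1)))) : (Fin (m + 1) → ℝ) → ℝ :=
  fun y => if Function.Injective y ∧ ∀ σ ∈ S, ¬ Realizes y σ then 1 else 0

/-- The integral operator (Tf)(x₁,…,x_m) = ∫₀¹ χ(t,x₁,…,x_m) f(t,x₁,…,x_{m-1}) dt. -/
def TOp {m : ℕ} (χ : (Fin (m + 1) → ℝ) → ℝ) (f : (Fin m → ℝ) → ℝ) :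
    (Fin m → ℝ) → ℝ :=
  fun x => ∫ t in Set.Icc (0 : ℝ) 1, χ (Fin.cons t x) * f (shiftIn t x)

/-- π ∈ S_n avoids the set S of consecutive patterns of length m+1. -/
def AvoidsSet {n m : ℕ} (π : Equiv.Perm (Fin n))
    (S : Set (Equiv.Perm (Fin (m + 1)))) : Prop :=
  ∀ (j : ℕ) (h : j + (m + 1) ≤ n), ∀ σ ∈ S,
    ¬ ∀ a b : Fin (m + 1),
        σ a < σ b ↔
          π ⟨j + a.val, by have := a.isLt; omega⟩ < π ⟨j + b.val, by have := b.isLt; omega⟩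

/-- α_n(S): the number of S-avoiding permutations in S_n. -/
def alphaCount (n m : ℕ) (S : Set (Equiv.Perm (Fin (m + 1)))) : ℕ :=
  Nat.card {π : Equiv.Perm (Fin n) // AvoidsSet π S}

open scoped ENNReal

namespace AP

def μ01 : Measure ℝ := volume.restrict (Set.Icc 0 1)
instance : IsProbabilityMeasure μ01 := ⟨by simp [μ01, Real.volume_Icc]⟩
instance : NullSingletonClass μ01 := Measure.restrict.instNullSingletonClass _
def piMeas (k : ℕ) : Measure (Fin k → ℝ) := Measure.pi fun _ => μ01
instance (k : ℕ) : IsProbabilityMeasure (piMeas k) := by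
  constructor; rw [piMeas, ← Set.pi_univ Set.univ, Measure.pi_pi]; simp
instance (k : ℕ) : SigmaFinite (piMeas k) := by unfold piMeas; infer_instance

def cat {k m : ℕ} (t : Fin k → ℝ) (x : Fin m → ℝ) : Fin (k + m) → ℝ :=
  fun i => if h : i.val < k then t ⟨i.val, h⟩ else x ⟨i.val - k, by have := i.isLt; omega⟩

def win (m : ℕ) {N : ℕ} (y : Fin N → ℝ) (j : ℕ) (h : j + (m + 1) ≤ N) : Fin (m + 1) → ℝ :=
  fun i => y ⟨j + i.val, by have := i.isLt; omega⟩

def G (m k : ℕ) (S : Set (Equiv.Perm (Fin (m + 1)))) (y : Fin (k + m) → ℝ) : ℝ :=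
  ∏ j : Fin k, chiS S (win m y j.val (by have := j.isLt; omega))

def Rset {n : ℕ} (π : Equiv.Perm (Fin n)) : Set (Fin n → ℝ) := {y | Realizes y π}
lemma measurableSet_realizes {k : ℕ} (σ : Equiv.Perm (Fin k)) :
    MeasurableSet {y : Fin k → ℝ | Realizes y σ} := by
  have : {y : Fin k → ℝ | Realizes y σ} =
      ⋂ (a : Fin k) (b : Fin k),
        (if σ a < σ b then {y : Fin k → ℝ | y a < y b} else {y : Fin k → ℝ | y a < y b}ᶜ) := by
    ext y
    simp only [Set.mem_setOf_eq, Set.mem_iInter, Realizes]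
    constructor
    · intro h a b
      by_cases hab : σ a < σ b
      · simp only [hab, if_true, Set.mem_setOf_eq]; exact (h a b).mp hab
      · simp only [hab, if_false, Set.mem_compl_iff, Set.mem_setOf_eq]
        exact fun hy => hab ((h a b).mpr hy)
    · intro h a b
      constructor
      · intro hab; have := h a b; simp only [hab, if_true, Set.mem_setOf_eq] at this; exact this
      · intro hy; by_contra hab
        have := h a b
        simp only [hab, if_false, Set.mem_compl_iff, Set.mem_setOf_eq] at this
        exact this hy
  rw [this]
  refine MeasurableSet.iInter fun a => MeasurableSet.iInter fun b => ?_
  by_cases hab : σ a < σ b <;> simp only [hab, if_true, if_false]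
  · exact measurableSet_lt (measurable_pi_apply a) (measurable_pi_apply b)
  · exact (measurableSet_lt (measurable_pi_apply a) (measurable_pi_apply b)).compl

lemma measurableSet_injective {k : ℕ} :
    MeasurableSet {y : Fin k → ℝ | Function.Injective y} := by
  have : {y : Fin k → ℝ | Function.Injective y} =
      ⋂ (a : Fin k) (b : Fin k), {y : Fin k → ℝ | a ≠ b → y a ≠ y b} := by
    ext y
    simp only [Set.mem_setOf_eq, Set.mem_iInter, Function.Injective]
    constructor
    · intro h a b hab hy; exact hab (h hy)
    · intro h a b hy; by_contra hab; exact h a b hab hy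
  rw [this]
  refine MeasurableSet.iInter fun a => MeasurableSet.iInter fun b => ?_
  by_cases hab : a = b
  · simp [hab]
  · simp only [hab, ne_eq, not_false_iff, true_implies]
    exact (measurableSet_eq_fun (measurable_pi_apply a) (measurable_pi_apply b)).compl

lemma measurableSet_chiCond {m : ℕ} (S : Set (Equiv.Perm (Fin (m + 1)))) :
    MeasurableSet {y : Fin (m+1) → ℝ |
      Function.Injective y ∧ ∀ σ ∈ S, ¬ Realizes y σ} := by
  have : {y : Fin (m+1) → ℝ | Function.Injective y ∧ ∀ σ ∈ S, ¬ Realizes y σ} =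
      {y | Function.Injective y} ∩ ⋂ (σ : Equiv.Perm (Fin (m+1))) (_ : σ ∈ S),
        {y : Fin (m+1) → ℝ | Realizes y σ}ᶜ := by
    ext y; simp [Set.mem_iInter]
  rw [this]
  exact measurableSet_injective.inter <| MeasurableSet.iInter fun σ =>
    MeasurableSet.iInter fun _ => (measurableSet_realizes σ).compl

lemma measurable_chiS {m : ℕ} (S : Set (Equiv.Perm (Fin (m + 1)))) :
    Measurable (chiS S) := by
  classical
  unfold chiS
  exact Measurable.ite (measurableSet_chiCond S) measurable_const measurable_const

lemma chiS_nonneg {m : ℕ} (S : Set (Equiv.Perm (Fin (m + 1)))) (y) : 0 ≤ chiS S y := by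
  unfold chiS; split <;> norm_num

lemma chiS_le_one {m : ℕ} (S : Set (Equiv.Perm (Fin (m + 1)))) (y) : chiS S y ≤ 1 := by
  unfold chiS; split <;> norm_num

lemma G_nonneg (m k S) (y : Fin (k + m) → ℝ) : 0 ≤ G m k S y :=
  Finset.prod_nonneg fun j _ => chiS_nonneg S _

lemma G_le_one (m k S) (y : Fin (k + m) → ℝ) : G m k S y ≤ 1 :=
  Finset.prod_le_one (fun j _ => chiS_nonneg S _) (fun j _ => chiS_le_one S _)

lemma measurable_G (m k S) : Measurable (G m k S) := by
  apply Finset.measurable_prod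
  intro j _
  exact (measurable_chiS S).comp
    (measurable_pi_lambda _ fun i => measurable_pi_apply _)

lemma integrable_of_bdd {α : Type*} [MeasurableSpace α] {μ : Measure α} [IsFiniteMeasure μ]
    {f : α → ℝ} (hf : Measurable f) (h0 : ∀ x, 0 ≤ f x) (h1 : ∀ x, f x ≤ 1) :
    Integrable f μ :=
  Integrable.mono' (integrable_const 1) hf.aestronglyMeasurable
    (Filter.Eventually.of_forall fun x => by
      rw [Real.norm_eq_abs, abs_of_nonneg (h0 x)]; exact h1 x)

/-- key coordinate identity -/
lemma key_coord (m k : ℕ) (hm : 1 ≤ m) (S : Set (Equiv.Perm (Fin (m + 1))))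
    (t : ℝ) (x : Fin m → ℝ) (s : Fin k → ℝ) :
    chiS S (Fin.cons t x) * G m k S (cat s (shiftIn t x)) =
      G m (k + 1) S (cat (cat s (fun _ : Fin 1 => t)) x) := by
  unfold G
  rw [Fin.prod_univ_castSucc, mul_comm]
  congr 1
  · apply Finset.prod_congr rfl
    intro j _
    congr 1
    funext i
    have hj := j.isLt
    have hi := i.isLt
    simp only [win, cat, shiftIn, Fin.coe_castSucc]
    split_ifs <;>
      first
        | rfl
        | (exfalso; omega)
        | (congr 1; simp only [Fin.mk.injEq]; omega)
  · congr 1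
    funext i
    rcases i with ⟨iv, hiv⟩
    match iv with
    | 0 =>
      rw [show (⟨0, hiv⟩ : Fin (m+1)) = 0 from rfl, Fin.cons_zero]
      simp only [win, cat, Fin.val_last, Fin.val_zero]
      split_ifs <;> simp_all <;> omega
    | iv + 1 =>
      rw [show (⟨iv+1, hiv⟩ : Fin (m+1)) = Fin.succ ⟨iv, by omega⟩ from rfl, Fin.cons_succ]
      simp only [win, cat, Fin.val_last, Fin.val_succ]
      rw [dif_neg (by omega : ¬ k + (iv + 1) < k + 1)]
      congr 1
      simp only [Fin.mk.injEq]
      omega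

set_option maxHeartbeats 1000000 in
lemma iterate_eq (m : ℕ) (hm : 1 ≤ m) (S : Set (Equiv.Perm (Fin (m + 1)))) :
    ∀ (k : ℕ) (x : Fin m → ℝ),
      (TOp (chiS S))^[k] (fun _ => 1) x = ∫ t, G m k S (cat t x) ∂(piMeas k) := by
  intro k
  induction k with
  | zero =>
    intro x
    simp only [Function.iterate_zero, id_eq]
    have : ∀ t : Fin 0 → ℝ, G m 0 S (cat t x) = 1 := by
      intro t; unfold G; simp
    rw [integral_congr_ae (Filter.Eventually.of_forall this), integral_const]
    simp
  | succ k ih =>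
    intro x
    rw [Function.iterate_succ_apply']
    show ∫ t in Set.Icc (0:ℝ) 1,
        chiS S (Fin.cons t x) * (TOp (chiS S))^[k] (fun _ => 1) (shiftIn t x) = _
    simp only [ih]
    have step1 : ∀ t : ℝ,
        chiS S (Fin.cons t x) * ∫ s, G m k S (cat s (shiftIn t x)) ∂(piMeas k)
          = ∫ s, G m (k+1) S (cat (cat s (fun _ : Fin 1 => t)) x) ∂(piMeas k) := by
      intro t
      rw [← integral_const_mul]
      exact integral_congr_ae (Filter.Eventually.of_forall fun s => key_coord m k hm S t x s)
    rw [show (∫ t in Set.Icc (0:ℝ) 1,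
        chiS S (Fin.cons t x) * ∫ s, G m k S (cat s (shiftIn t x)) ∂(piMeas k)) =
        ∫ t, (∫ s, G m (k+1) S (cat (cat s (fun _ : Fin 1 => t)) x) ∂(piMeas k)) ∂μ01 from
      integral_congr_ae (Filter.Eventually.of_forall step1)]
    -- now Fubini
    set e := MeasurableEquiv.piFinSuccAbove (fun _ : Fin (k+1) => ℝ) (Fin.last k) with he
    have hmp : MeasurePreserving e (piMeas (k+1)) (μ01.prod (piMeas k)) :=
      measurePreserving_piFinSuccAbove (fun _ => μ01) (Fin.last k)
    set g : ℝ × (Fin k → ℝ) → ℝ :=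
      fun p => G m (k+1) S (cat (cat p.2 (fun _ : Fin 1 => p.1)) x) with hg
    have hcoe : ∀ v : Fin (k+1) → ℝ,
        e v = (v (Fin.last k), fun j : Fin k => v j.castSucc) := by
      intro v
      rw [he]
      refine Prod.ext rfl ?_
      funext j
      simp [MeasurableEquiv.piFinSuccAbove_apply, Fin.removeNth, Fin.succAbove_last, Fin.init]
    have hge : ∀ u : Fin (k+1) → ℝ, g (e u) = G m (k+1) S (cat u x) := by
      intro u
      rw [hcoe u]
      simp only [hg]
      congr 1
      funext i
      have hi := i.isLt
      simp only [cat]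
      split_ifs <;>
        first
          | rfl
          | (exfalso; omega)
          | (congr 1; apply Fin.ext;
             simp only [Fin.coe_castSucc, Fin.val_last, Fin.mk.injEq]; omega)
    have hgm : Measurable g := by
      apply (measurable_G m (k+1) S).comp
      apply measurable_pi_lambda
      intro i
      simp only [cat]
      split_ifs <;>
        first
          | exact (measurable_pi_apply _).comp measurable_snd
          | exact measurable_fst
          | exact measurable_const
    have hint : Integrable g (μ01.prod (piMeas k)) :=
      integrable_of_bdd hgm (fun p => G_nonneg _ _ _ _) (fun p => G_le_one _ _ _ _)
    calc ∫ t, (∫ s, g (t, s) ∂(piMeas k)) ∂μ01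
        = ∫ p, g p ∂(μ01.prod (piMeas k)) := (integral_prod g hint).symm
      _ = ∫ u, g (e u) ∂(piMeas (k+1)) :=
          (hmp.integral_comp e.measurableEmbedding g).symm
      _ = ∫ u, G m (k+1) S (cat u x) ∂(piMeas (k+1)) :=
          integral_congr_ae (Filter.Eventually.of_forall hge)

lemma measurable_cat_pair {k m : ℕ} :
    Measurable (fun p : (Fin k → ℝ) × (Fin m → ℝ) => cat p.1 p.2) := by
  apply measurable_pi_lambda
  intro i
  simp only [cat]
  split_ifs
  · exact (measurable_pi_apply _).comp measurable_fst
  · exact (measurable_pi_apply _).comp measurable_snd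

/-- Lemma B: combining iterated integrals over the two cubes into one. -/
lemma double_int_eq (m k : ℕ) (F : (Fin (k + m) → ℝ) → ℝ) (hF : Measurable F)
    (h0 : ∀ y, 0 ≤ F y) (h1 : ∀ y, F y ≤ 1) :
    ∫ x, (∫ t, F (cat t x) ∂piMeas k) ∂piMeas m = ∫ y, F y ∂piMeas (k + m) := by
  set e2 := MeasurableEquiv.piCongrLeft (fun _ : Fin (k+m) => ℝ) finSumFinEquiv with he2
  have mp2 : MeasurePreserving e2 (Measure.pi fun _ : Fin k ⊕ Fin m => μ01) (piMeas (k+m)) :=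
    measurePreserving_piCongrLeft (fun _ : Fin (k+m) => μ01) finSumFinEquiv
  set e1 := MeasurableEquiv.sumPiEquivProdPi (fun _ : Fin k ⊕ Fin m => ℝ) with he1
  have mp1 : MeasurePreserving e1 (Measure.pi fun _ : Fin k ⊕ Fin m => μ01)
      ((piMeas k).prod (piMeas m)) :=
    measurePreserving_sumPiEquivProdPi (fun _ => μ01)
  set H : (Fin k → ℝ) × (Fin m → ℝ) → ℝ := fun p => F (cat p.1 p.2) with hH
  have key : ∀ w : (i : Fin k ⊕ Fin m) → ℝ, H (e1 w) = F (e2 w) := by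
    intro w
    simp only [hH]
    congr 1
    funext i
    have : e2 w i = w (finSumFinEquiv.symm i) := by
      rw [he2]
      conv_lhs => rw [show i = finSumFinEquiv (finSumFinEquiv.symm i) by simp]
      rw [MeasurableEquiv.piCongrLeft_apply_apply]
    rw [this]
    simp only [cat, he1, MeasurableEquiv.coe_sumPiEquivProdPi]
    split_ifs with h
    · have : finSumFinEquiv.symm i = Sum.inl ⟨i.val, h⟩ := by
        rw [Equiv.symm_apply_eq]
        exact Fin.ext (by simp [finSumFinEquiv_apply_left])
      rw [this]
      rfl
    · have hi := i.isLt
      have : finSumFinEquiv.symm i = Sum.inr ⟨i.val - k, by omega⟩ := by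
        rw [Equiv.symm_apply_eq]
        exact Fin.ext (by simp [finSumFinEquiv_apply_right]; omega)
      rw [this]
      rfl
  have hHm : Measurable H := hF.comp measurable_cat_pair
  have hHint : Integrable H ((piMeas k).prod (piMeas m)) :=
    integrable_of_bdd hHm (fun p => h0 _) (fun p => h1 _)
  calc ∫ x, (∫ t, F (cat t x) ∂piMeas k) ∂piMeas m
      = ∫ t, (∫ x, H (t, x) ∂piMeas m) ∂piMeas k := by
        have : Integrable (Function.uncurry fun x t => H (t, x))
            ((piMeas m).prod (piMeas k)) := by
          apply integrable_of_bdd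
          · exact hHm.comp measurable_swap
          · exact fun p => h0 _
          · exact fun p => h1 _
        exact integral_integral_swap this
    _ = ∫ p, H p ∂((piMeas k).prod (piMeas m)) := (integral_prod H hHint).symm
    _ = ∫ w, H (e1 w) ∂(Measure.pi fun _ : Fin k ⊕ Fin m => μ01) :=
        (mp1.integral_comp e1.measurableEmbedding H).symm
    _ = ∫ w, F (e2 w) ∂(Measure.pi fun _ : Fin k ⊕ Fin m => μ01) :=
        integral_congr_ae (Filter.Eventually.of_forall key)
    _ = ∫ y, F y ∂piMeas (k+m) := mp2.integral_comp e2.measurableEmbedding F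

lemma realizes_inj {n : ℕ} {y : Fin n → ℝ} {π : Equiv.Perm (Fin n)}
    (h : Realizes y π) : Function.Injective y := by
  intro a b hab
  by_contra hne
  rcases (Ne.lt_or_gt (fun h' : π a = π b => hne (π.injective h'))) with hlt | hlt
  · exact absurd ((h a b).mp hlt) (by rw [hab]; exact lt_irrefl _)
  · exact absurd ((h b a).mp hlt) (by rw [hab]; exact lt_irrefl _)

lemma eq_of_realizes {n : ℕ} {y : Fin n → ℝ} {π π' : Equiv.Perm (Fin n)}
    (h : Realizes y π) (h' : Realizes y π') : π = π' := by
  have key : StrictMono (fun a => π' (π.symm a)) := by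
    intro a b hab
    exact (h' _ _).mpr ((h _ _).mp (by simpa using hab))
  haveI : WellFoundedLT (Fin n) := inferInstance
  have hid : (fun a => π' (π.symm a)) = id := by
    have hrange : Set.range (fun a => π' (π.symm a)) = Set.range (id : Fin n → Fin n) := by
      rw [Set.range_id]
      exact Set.range_eq_univ.mpr fun c => ⟨π (π'.symm c), by simp⟩
    exact (StrictMono.range_inj (β := Fin n) (γ := Fin n) key
      (strictMono_id (α := Fin n))).mp hrange
  refine Equiv.ext fun a => ?_
  have := congrFun hid (π a)
  simpa using this.symm

lemma exists_realizes {n : ℕ} {y : Fin n → ℝ} (h : Function.Injective y) :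
    ∃ π : Equiv.Perm (Fin n), Realizes y π := by
  set τ := Tuple.sort y with hτ
  have hmono : Monotone (y ∘ τ) := Tuple.monotone_sort y
  have hsm : StrictMono (y ∘ τ) := by
    apply hmono.strictMono_of_injective
    exact h.comp τ.injective
  refine ⟨τ⁻¹, fun a b => ?_⟩
  have ha : y a = (y ∘ τ) (τ⁻¹ a) := by simp
  have hb : y b = (y ∘ τ) (τ⁻¹ b) := by simp
  rw [ha, hb]
  exact ⟨fun hl => hsm (by simpa using hl), fun hl => by simpa using hsm.lt_iff_lt.mp hl⟩

lemma null_eq_coord {n : ℕ} (a b : Fin (n+1)) (hab : a ≠ b) :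
    piMeas (n+1) {y | y a = y b} = 0 := by
  obtain ⟨j, hj⟩ := Fin.exists_succAbove_eq (Ne.symm hab)
  set e := MeasurableEquiv.piFinSuccAbove (fun _ : Fin (n+1) => ℝ) a with he
  have mp : MeasurePreserving e (piMeas (n+1)) (μ01.prod (piMeas n)) :=
    measurePreserving_piFinSuccAbove (fun _ => μ01) a
  set B : Set (ℝ × (Fin n → ℝ)) := {p | p.1 = p.2 j} with hB
  have hBm : MeasurableSet B :=
    measurableSet_eq_fun measurable_fst ((measurable_pi_apply j).comp measurable_snd)
  have hpre : ⇑e ⁻¹' B = {y | y a = y b} := by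
    ext y
    show (e y).1 = (e y).2 j ↔ y a = y b
    have h1 : (e y).1 = y a := rfl
    have h2 : (e y).2 j = y (a.succAbove j) := rfl
    rw [h1, h2, hj]
  have h1 : piMeas (n+1) {y | y a = y b} = (μ01.prod (piMeas n)) B := by
    rw [← hpre]
    exact mp.measure_preimage hBm.nullMeasurableSet
  rw [h1, Measure.prod_apply hBm]
  have hslice : ∀ t : ℝ, piMeas n (Prod.mk t ⁻¹' B) = 0 := by
    intro t
    have : Prod.mk t ⁻¹' B = {z : Fin n → ℝ | z j = t} := by
      ext z; simp [hB, eq_comm]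
    rw [this]
    exact Measure.pi_hyperplane (fun _ => μ01) j t
  simp only [hslice]
  simp

lemma null_noninj {n : ℕ} : piMeas (n+1) {y | ¬ Function.Injective y} = 0 := by
  have hsub : {y : Fin (n+1) → ℝ | ¬ Function.Injective y} ⊆
      ⋃ p : Fin (n+1) × Fin (n+1), {y | p.1 ≠ p.2 ∧ y p.1 = y p.2} := by
    intro y hy
    simp only [Set.mem_setOf_eq, Function.Injective, not_forall] at hy
    obtain ⟨a, b, hab, hne⟩ := hy
    exact Set.mem_iUnion.mpr ⟨(a, b), hne, hab⟩
  refine measure_mono_null hsub (measure_iUnion_null fun p => ?_)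
  by_cases hp : p.1 = p.2
  · simp [hp]
  · refine measure_mono_null (fun y hy => hy.2) (null_eq_coord p.1 p.2 hp)

lemma Rset_preimage_measure {n : ℕ} (σ τ : Equiv.Perm (Fin n)) :
    piMeas n (Rset (σ * τ)) = piMeas n (Rset σ) := by
  set Φ := MeasurableEquiv.piCongrLeft (fun _ : Fin n => ℝ) (τ : Fin n ≃ Fin n) with hΦ
  have mp : MeasurePreserving Φ (piMeas n) (piMeas n) :=
    measurePreserving_piCongrLeft (fun _ : Fin n => μ01) (τ : Fin n ≃ Fin n)
  have happ : ∀ (w : Fin n → ℝ) (i : Fin n), Φ w i = w (τ.symm i) := by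
    intro w i
    conv_lhs => rw [hΦ, show i = τ (τ.symm i) by simp]
    rw [MeasurableEquiv.piCongrLeft_apply_apply]
  have hpre : ⇑Φ ⁻¹' (Rset σ) = Rset (σ * τ) := by
    ext y
    simp only [Set.mem_preimage, Rset, Set.mem_setOf_eq, Realizes]
    constructor
    · intro h c d
      have := h (τ c) (τ d)
      simpa [happ, Equiv.Perm.mul_apply] using this
    · intro h a b
      have := h (τ.symm a) (τ.symm b)
      simpa [happ, Equiv.Perm.mul_apply] using this
  rw [← hpre]
  exact mp.measure_preimage (measurableSet_realizes σ).nullMeasurableSet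

lemma Rset_measure {n : ℕ} (π : Equiv.Perm (Fin (n+1))) :
    piMeas (n+1) (Rset π) = ((Nat.factorial (n+1) : ℕ) : ℝ≥0∞)⁻¹ := by
  have hconst : ∀ π' : Equiv.Perm (Fin (n+1)),
      piMeas (n+1) (Rset π') = piMeas (n+1) (Rset 1) := by
    intro π'
    have := Rset_preimage_measure (1 : Equiv.Perm (Fin (n+1))) π'
    rwa [one_mul] at this
  have hun : (⋃ π' : Equiv.Perm (Fin (n+1)), Rset π') =
      {y : Fin (n+1) → ℝ | Function.Injective y} := by
    ext y
    simp only [Set.mem_iUnion, Rset, Set.mem_setOf_eq]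
    exact ⟨fun ⟨π', h⟩ => realizes_inj h, fun h => exists_realizes h⟩
  have hdisj : Pairwise (Function.onFun Disjoint fun π' : Equiv.Perm (Fin (n+1)) => Rset π') := by
    intro π₁ π₂ hne
    rw [Function.onFun, Set.disjoint_left]
    intro y h1 h2
    exact hne (eq_of_realizes h1 h2)
  have hinj1 : piMeas (n+1) {y : Fin (n+1) → ℝ | Function.Injective y} = 1 := by
    have h2 := measure_add_measure_compl (μ := piMeas (n+1))
      (measurableSet_injective (k := n+1))
    rw [measure_univ] at h2
    have hc : {y : Fin (n+1) → ℝ | Function.Injective y}ᶜ =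
        {y : Fin (n+1) → ℝ | ¬ Function.Injective y} := by
      ext y; simp
    rw [hc, null_noninj, add_zero] at h2
    exact h2
  have hsum : ∑' π' : Equiv.Perm (Fin (n+1)), piMeas (n+1) (Rset π') = 1 := by
    rw [← measure_iUnion hdisj (fun π' => measurableSet_realizes π'), hun, hinj1]
  rw [tsum_fintype] at hsum
  simp only [hconst] at hsum
  rw [Finset.sum_const, Finset.card_univ, Fintype.card_perm, Fintype.card_fin] at hsum
  have hNe : ((Nat.factorial (n+1) : ℕ) : ℝ≥0∞) ≠ 0 := by
    simp [Nat.factorial_ne_zero]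
  have hNt : ((Nat.factorial (n+1) : ℕ) : ℝ≥0∞) ≠ ⊤ := by simp
  have : piMeas (n+1) (Rset 1) = ((Nat.factorial (n+1) : ℕ) : ℝ≥0∞)⁻¹ := by
    have h3 : ((Nat.factorial (n+1) : ℕ) : ℝ≥0∞) * piMeas (n+1) (Rset 1) = 1 := by
      rw [← hsum, nsmul_eq_mul]
    calc piMeas (n+1) (Rset 1)
        = (((Nat.factorial (n+1) : ℕ) : ℝ≥0∞)⁻¹ * ((Nat.factorial (n+1) : ℕ) : ℝ≥0∞)) *
          piMeas (n+1) (Rset 1) := by rw [ENNReal.inv_mul_cancel hNe hNt, one_mul]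
      _ = ((Nat.factorial (n+1) : ℕ) : ℝ≥0∞)⁻¹ := by rw [mul_assoc, h3, mul_one]
  rw [hconst π, this]


lemma null_noninj' {n : ℕ} : piMeas n {y | ¬ Function.Injective y} = 0 := by
  cases n with
  | zero =>
    have h : {y : Fin 0 → ℝ | ¬ Function.Injective y} = ∅ := by
      ext y
      simp only [Set.mem_setOf_eq, Set.mem_empty_iff_false, iff_false, not_not]
      exact fun a => a.elim0
    rw [h, measure_empty]
  | succ n => exact null_noninj

lemma Rset_measure' {n : ℕ} (π : Equiv.Perm (Fin n)) :
    piMeas n (Rset π) = ((n.factorial : ℕ) : ℝ≥0∞)⁻¹ := by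
  cases n with
  | zero =>
    have h : Rset π = Set.univ := by
      ext y
      simp only [Rset, Set.mem_setOf_eq, Set.mem_univ, iff_true, Realizes]
      exact fun a => a.elim0
    rw [h, measure_univ]
    simp [Nat.factorial]
  | succ n => exact Rset_measure π

lemma measurableSet_Rset {n : ℕ} (π : Equiv.Perm (Fin n)) : MeasurableSet (Rset π) :=
  measurableSet_realizes π
open Classical in
lemma G_on_Rset (m k : ℕ) (S : Set (Equiv.Perm (Fin (m + 1))))
    (π : Equiv.Perm (Fin (k + m))) {y : Fin (k + m) → ℝ} (hy : y ∈ Rset π) :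
    G m k S y = if AvoidsSet π S then 1 else 0 := by
  classical
  have hreal : Realizes y π := hy
  have hyinj : Function.Injective y := realizes_inj hreal
  -- translation between window realization and the permutation pattern condition
  have htrans : ∀ (j : ℕ) (h : j + (m + 1) ≤ k + m) (σ : Equiv.Perm (Fin (m+1))),
      Realizes (win m y j h) σ ↔
        (∀ a b : Fin (m + 1),
          σ a < σ b ↔
            π ⟨j + a.val, by have := a.isLt; omega⟩ <
              π ⟨j + b.val, by have := b.isLt; omega⟩) := by
    intro j h σ
    constructor
    · intro hr a b
      rw [hreal ⟨j + a.val, by have := a.isLt; omega⟩ ⟨j + b.val, by have := b.isLt; omega⟩]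
      exact hr a b
    · intro hr a b
      rw [hr a b]
      exact (hreal _ _)
  have hwininj : ∀ (j : ℕ) (h : j + (m + 1) ≤ k + m),
      Function.Injective (win m y j h) := by
    intro j h a b hab
    have := hyinj hab
    have h2 : j + a.val = j + b.val := congrArg Fin.val this
    exact Fin.ext (by omega)
  by_cases hA : AvoidsSet π S
  · rw [if_pos hA]
    apply Finset.prod_eq_one
    intro j _
    have hcond : Function.Injective (win m y j.val (by have := j.isLt; omega)) ∧
        ∀ σ ∈ S, ¬ Realizes (win m y j.val (by have := j.isLt; omega)) σ := by
      refine ⟨hwininj _ _, fun σ hσ hr => ?_⟩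
      exact hA j.val (by have := j.isLt; omega) σ hσ ((htrans _ _ σ).mp hr)
    simp only [chiS]
    rw [if_pos hcond]
  · rw [if_neg hA]
    simp only [AvoidsSet, not_forall] at hA
    obtain ⟨j, h, σ, hσ, hall⟩ := hA
    push_neg at hall
    have hjk : j < k := by omega
    apply Finset.prod_eq_zero (Finset.mem_univ (⟨j, hjk⟩ : Fin k))
    have hr : Realizes (win m y j (by omega)) σ := (htrans j (by omega) σ).mpr hall
    have hcond : ¬ (Function.Injective (win m y j (by omega)) ∧
        ∀ σ' ∈ S, ¬ Realizes (win m y j (by omega)) σ') := by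
      intro ⟨_, hc⟩
      exact hc σ hσ hr
    simp only [chiS]
    rw [if_neg hcond]

open Classical in
lemma intG (m k : ℕ) (S : Set (Equiv.Perm (Fin (m + 1)))) :
    ∫ y, G m k S y ∂piMeas (k + m) =
      (alphaCount (k + m) m S : ℝ) / (((k + m).factorial : ℕ) : ℝ) := by
  classical
  have hGint : Integrable (G m k S) (piMeas (k + m)) :=
    integrable_of_bdd (measurable_G m k S) (G_nonneg m k S) (G_le_one m k S)
  have hinjset : MeasurableSet {y : Fin (k+m) → ℝ | Function.Injective y} :=
    measurableSet_injective
  have hcompl : {y : Fin (k+m) → ℝ | Function.Injective y}ᶜ =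
      {y : Fin (k+m) → ℝ | ¬ Function.Injective y} := by ext y; simp
  have hzero : ∫ y in {y : Fin (k+m) → ℝ | Function.Injective y}ᶜ,
      G m k S y ∂piMeas (k+m) = 0 := by
    rw [hcompl]
    have : (piMeas (k+m)).restrict {y : Fin (k+m) → ℝ | ¬ Function.Injective y} = 0 :=
      Measure.restrict_eq_zero.mpr null_noninj'
    rw [this, integral_zero_measure]
  have hsplit : ∫ y, G m k S y ∂piMeas (k+m) =
      ∫ y in {y : Fin (k+m) → ℝ | Function.Injective y}, G m k S y ∂piMeas (k+m) := by
    rw [← integral_add_compl hinjset hGint, hzero, add_zero]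
  have hun : {y : Fin (k+m) → ℝ | Function.Injective y} =
      ⋃ π : Equiv.Perm (Fin (k+m)), Rset π := by
    ext y
    simp only [Set.mem_iUnion, Rset, Set.mem_setOf_eq]
    exact ⟨fun h => exists_realizes h, fun ⟨π, h⟩ => realizes_inj h⟩
  have hdisj : Pairwise (Function.onFun Disjoint fun π : Equiv.Perm (Fin (k+m)) => Rset π) := by
    intro π₁ π₂ hne
    rw [Function.onFun, Set.disjoint_left]
    intro y h1 h2
    exact hne (eq_of_realizes h1 h2)
  have hsum : ∫ y in ⋃ π : Equiv.Perm (Fin (k+m)), Rset π, G m k S y ∂piMeas (k+m) =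
      ∑ π : Equiv.Perm (Fin (k+m)), ∫ y in Rset π, G m k S y ∂piMeas (k+m) :=
    integral_iUnion_fintype (fun π => measurableSet_Rset π) hdisj
      (fun π => hGint.integrableOn)
  have heach : ∀ π : Equiv.Perm (Fin (k+m)),
      ∫ y in Rset π, G m k S y ∂piMeas (k+m) =
        (if AvoidsSet π S then (1:ℝ) else 0) * (((k+m).factorial : ℕ) : ℝ)⁻¹ := by
    intro π
    rw [setIntegral_congr_fun (measurableSet_Rset π)
      (fun y hy => G_on_Rset m k S π hy)]
    rw [setIntegral_const, measureReal_def, Rset_measure']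
    rw [ENNReal.toReal_inv, ENNReal.toReal_natCast, smul_eq_mul, mul_comm]
  rw [hsplit, hun, hsum]
  simp only [heach]
  rw [← Finset.sum_mul]
  have hcount : ∑ π : Equiv.Perm (Fin (k+m)), (if AvoidsSet π S then (1:ℝ) else 0) =
      (alphaCount (k+m) m S : ℝ) := by
    rw [Finset.sum_boole, alphaCount, Nat.card_eq_fintype_card, Fintype.card_subtype]
  rw [hcount, div_eq_mul_inv]

lemma piMeas_eq (m : ℕ) :
    (volume : Measure (Fin m → ℝ)).restrict (unitCube m) = piMeas m := by
  rw [piMeas]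
  refine (Measure.pi_eq fun s hs => ?_).symm
  rw [Measure.restrict_apply (MeasurableSet.univ_pi hs), unitCube,
    ← Set.pi_inter_distrib, volume_pi_pi]
  exact Finset.prod_congr rfl fun i _ =>
    (Measure.restrict_apply (hs i)).symm


end AP

/-- for n ≥ m, α_n(S)/n! = ⟨T^{n-m}(𝟙), 𝟙⟩, i.e. the integral of
T^{n-m}(𝟙) over the unit cube [0,1]^m. -/
theorem alpha_div_factorial_eq_inner (m : ℕ) (hm : 2 ≤ m)
    (S : Set (Equiv.Perm (Fin (m + 1)))) (n : ℕ) (hn : m ≤ n) :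
    (alphaCount n m S : ℝ) / (n.factorial : ℝ) =
      ∫ x in unitCube m, (TOp (chiS S))^[n - m] (fun _ => 1) x := by
  obtain ⟨k, rfl⟩ : ∃ k, n = k + m := ⟨n - m, by omega⟩
  have hk : k + m - m = k := by omega
  rw [hk]
  rw [show (∫ x in unitCube m, (TOp (chiS S))^[k] (fun _ => 1) x)
      = ∫ x, (TOp (chiS S))^[k] (fun _ => 1) x ∂AP.piMeas m by rw [← AP.piMeas_eq]]
  rw [integral_congr_ae (Filter.Eventually.of_forall
    (AP.iterate_eq m (by omega) S k))]
  rw [AP.double_int_eq m k (AP.G m k S) (AP.measurable_G m k S)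
    (AP.G_nonneg m k S) (AP.G_le_one m k S)]
  rw [AP.intG m k S]

end
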